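/- Let G be a group acting on a C*-algebra A, let I be a G-invariant hereditary symmetric ideal, and let e ∈ I be positive. Then for every self-adjoint a in the smallest G-invariant symmetric hereditary ideal containing e, there exist n ≥ 1 and t₁,...,tₙ ∈ G such that τ(a) ≤ Σⱼ τ(α_{tⱼ}(e)) for all positive linear traces τ with domain I. -/

import Mathlib

open ComplexOrder

private def stmt7Rep {α : Type*} : ℕ → List α → List α
  | 0, _ => []
  | n+1, l => l ++ stmt7Rep n l

private lemma stmt7Rep_sum {α : Type*} (f : α → ℝ) (l : List α) :
    ∀ n, ((stmt7Rep n l).map f).sum = n * (l.map f).sum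
  | 0 => by simp [stmt7Rep]
  | n+1 => by
    simp only [stmt7Rep, List.map_append, List.sum_append, stmt7Rep_sum f l n,
      Nat.cast_add, Nat.cast_one]
    ring

private lemma stmt7Rep_ne_nil {α : Type*} (n : ℕ) (l : List α) (hl : l ≠ []) :
    stmt7Rep (n+1) l ≠ [] := by
  simp only [stmt7Rep, ne_eq, List.append_eq_nil_iff]
  tauto

private lemma stmt7_polar {A : Type*} [NonUnitalCStarAlgebra A] (u v : A) :
    star u * v =
    (4:ℂ)⁻¹ • (star (v + (1:ℂ) • u) * (v + (1:ℂ) • u)) +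
    ((4:ℂ)⁻¹ * Complex.I) • (star (v + Complex.I • u) * (v + Complex.I • u)) +
    (-(4:ℂ)⁻¹) • (star (v + (-1:ℂ) • u) * (v + (-1:ℂ) • u)) +
    (-((4:ℂ)⁻¹ * Complex.I)) • (star (v + (-Complex.I) • u) * (v + (-Complex.I) • u)) := by
  simp only [star_add, star_smul, mul_add, add_mul, smul_mul_assoc, mul_smul_comm, smul_smul,
    Complex.star_def, map_one, map_neg, Complex.conj_I]
  match_scalars <;> (ring_nf; try norm_num [Complex.I_sq])

private lemma stmt7_smul_nonneg {A G : Type*} [NonUnitalCStarAlgebra A] [PartialOrder A]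
    [StarOrderedRing A] [Group G] [DistribMulAction G A]
    (hactmul : ∀ (t : G) (x y : A), t • (x * y) = (t • x) * (t • y))
    (hactstar : ∀ (t : G) (x : A), t • (star x) = star (t • x))
    (t : G) {x : A} (hx : 0 ≤ x) : 0 ≤ t • x := by
  rw [StarOrderedRing.nonneg_iff] at hx
  induction hx using AddSubmonoid.closure_induction with
  | mem y hy =>
    obtain ⟨s, rfl⟩ := hy
    rw [hactmul, hactstar]
    exact star_mul_self_nonneg _
  | zero => simp
  | add a b _ _ ha hb =>
    rw [smul_add]
    exact add_nonneg ha hb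

section stmt7defs

variable {A G : Type*} [NonUnitalCStarAlgebra A] [PartialOrder A] [SMul G A]

/-- trace predicate -/
def stmt7Tr (I : Submodule ℂ A) (τ : A → ℂ) : Prop :=
  (∀ x ∈ I, ∀ y ∈ I, τ (x + y) = τ x + τ y) ∧
  (∀ c : ℂ, ∀ x ∈ I, τ (c • x) = c * τ x) ∧
  (∀ x ∈ I, 0 ≤ x → 0 ≤ τ x) ∧
  (∀ x : A, star x * x ∈ I → τ (star x * x) = τ (x * star x))

/-- weighted sum over a list of group elements -/
def stmt7Phi (e : A) (τ : A → ℂ) (l : List G) : ℝ :=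
  (l.map fun t => (τ (t • e)).re).sum

/-- the generating set -/
def stmt7S (I : Submodule ℂ A) (e : A) : Set A :=
  {s | s ∈ I ∧ 0 ≤ s ∧ ∃ l : List G, l ≠ [] ∧
    ∀ τ : A → ℂ, stmt7Tr I τ → (τ s).re ≤ stmt7Phi e τ l}

end stmt7defs

/-- Let a group `G` act on a C*-algebra `A` by *-automorphisms, let `I` be a
`G`-invariant hereditary symmetric ideal and `e ∈ I` positive. Then every self-adjoint `a`
in the smallest `G`-invariant hereditary symmetric ideal containing `e` satisfies:
there are `t₁,…,tₙ ∈ G` with `τ(a) ≤ Σⱼ τ(tⱼ•e)` for every positive linear trace `τ` with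
domain `I`. -/
theorem stmt7 {A G : Type*} [NonUnitalCStarAlgebra A] [PartialOrder A] [StarOrderedRing A]
    [Group G] [DistribMulAction G A]
    (hactmul : ∀ (t : G) (x y : A), t • (x * y) = (t • x) * (t • y))
    (hactstar : ∀ (t : G) (x : A), t • (star x) = star (t • x))
    (hactsmul : ∀ (t : G) (c : ℂ) (x : A), t • (c • x) = c • (t • x))
    (I : Submodule ℂ A)
    (hIideal : ∀ x ∈ I, ∀ y : A, y * x ∈ I ∧ x * y ∈ I)
    (hIstar : ∀ x ∈ I, star x ∈ I)
    (hIher : ∀ a b : A, 0 ≤ a → a ≤ b → b ∈ I → a ∈ I)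
    (hIsym : ∀ x : A, star x * x ∈ I → x * star x ∈ I)
    (hIinv : ∀ (t : G), ∀ x ∈ I, t • x ∈ I)
    (e : A) (hepos : 0 ≤ e) (heI : e ∈ I)
    (a : A) (hasa : IsSelfAdjoint a)
    (hmin : ∀ J : Submodule ℂ A,
      (∀ x ∈ J, ∀ y : A, y * x ∈ J ∧ x * y ∈ J) →
      (∀ x ∈ J, star x ∈ J) →
      (∀ a' b : A, 0 ≤ a' → a' ≤ b → b ∈ J → a' ∈ J) →
      (∀ x : A, star x * x ∈ J → x * star x ∈ J) →
      (∀ (t : G), ∀ x ∈ J, t • x ∈ J) →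
      e ∈ J → a ∈ J) :
    ∃ n : ℕ, 0 < n ∧ ∃ t : Fin n → G,
      ∀ τ : A → ℂ,
        (∀ x ∈ I, ∀ y ∈ I, τ (x + y) = τ x + τ y) →
        (∀ c : ℂ, ∀ x ∈ I, τ (c • x) = c * τ x) →
        (∀ x ∈ I, 0 ≤ x → 0 ≤ τ x) →
        (∀ x : A, star x * x ∈ I → τ (star x * x) = τ (x * star x)) →
        (τ a).re ≤ ∑ j : Fin n, (τ (t j • e)).re := by
  classical
  set S : Set A := stmt7S (G := G) I e with hSdef
  set J : Submodule ℂ A := Submodule.span ℂ S with hJdef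
  -- basic trace facts
  have hτ0 : ∀ τ : A → ℂ, stmt7Tr I τ → τ 0 = 0 := by
    intro τ hτ
    have := hτ.2.1 0 0 (zero_mem I)
    simpa using this
  have hτpos : ∀ τ : A → ℂ, stmt7Tr I τ → ∀ x ∈ I, 0 ≤ x →
      0 ≤ (τ x).re ∧ (τ x).im = 0 := by
    intro τ hτ x hx h0
    have := hτ.2.2.1 x hx h0
    rw [Complex.le_def] at this
    exact ⟨by simpa using this.1, by simpa using this.2.symm⟩
  have hτmono : ∀ τ : A → ℂ, stmt7Tr I τ → ∀ x ∈ I, ∀ y ∈ I, x ≤ y →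
      (τ x).re ≤ (τ y).re := by
    intro τ hτ x hx y hy hxy
    have hmem : y - x ∈ I := sub_mem hy hx
    have h1 : τ (x + (y - x)) = τ x + τ (y - x) := hτ.1 x hx (y - x) hmem
    rw [show x + (y - x) = y by abel] at h1
    have h2 := (hτpos τ hτ (y - x) hmem (sub_nonneg.mpr hxy)).1
    have h3 := congrArg Complex.re h1
    simp only [Complex.add_re] at h3
    linarith
  have hΦnonneg : ∀ τ : A → ℂ, stmt7Tr I τ → ∀ l : List G, 0 ≤ stmt7Phi e τ l := by
    intro τ hτ l
    refine List.sum_nonneg ?_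
    intro x hx
    simp only [List.mem_map] at hx
    obtain ⟨t, -, rfl⟩ := hx
    exact (hτpos τ hτ (t • e) (hIinv t e heI) (stmt7_smul_nonneg hactmul hactstar t hepos)).1
  have hΦrep : ∀ (τ : A → ℂ) (n : ℕ) (l : List G),
      stmt7Phi e τ (stmt7Rep n l) = n * stmt7Phi e τ l :=
    fun τ n l => stmt7Rep_sum _ l n
  have hΦappend : ∀ (τ : A → ℂ) (l₁ l₂ : List G),
      stmt7Phi e τ (l₁ ++ l₂) = stmt7Phi e τ l₁ + stmt7Phi e τ l₂ := by
    intro τ l₁ l₂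
    simp [stmt7Phi]
  have hSI : S ⊆ (I : Set A) := fun s hs => hs.1
  have hJI : ∀ x ∈ J, x ∈ I := fun x hx => Submodule.span_le.mpr hSI hx
  have heS : e ∈ S := by
    refine ⟨heI, hepos, [1], by simp, fun τ hτ => ?_⟩
    simp [stmt7Phi]
  -- KEY estimate on all of J
  have hτreal : ∀ τ : A → ℂ, stmt7Tr I τ → ∀ x ∈ I, 0 ≤ x →
      ‖τ x‖ = (τ x).re := by
    intro τ hτ x hx h0
    obtain ⟨hre, him⟩ := hτpos τ hτ x hx h0
    rw [show τ x = ((τ x).re : ℂ) from Complex.ext rfl (by simpa using him)]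
    simpa [Complex.norm_real, Real.norm_eq_abs] using abs_of_nonneg hre
  have hKEY : ∀ b ∈ J, ∃ l : List G, l ≠ [] ∧
      ∀ τ : A → ℂ, stmt7Tr I τ → ‖τ b‖ ≤ stmt7Phi e τ l := by
    intro b hb
    induction hb using Submodule.span_induction with
    | mem s hs =>
      obtain ⟨hsI, hs0, l, hl, hbound⟩ := hs
      refine ⟨l, hl, fun τ hτ => ?_⟩
      rw [hτreal τ hτ s hsI hs0]
      exact hbound τ hτ
    | zero =>
      refine ⟨[1], by simp, fun τ hτ => ?_⟩
      rw [hτ0 τ hτ]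
      simpa using hΦnonneg τ hτ [1]
    | add x y hx hy ihx ihy =>
      obtain ⟨l1, hl1, h1⟩ := ihx
      obtain ⟨l2, hl2, h2⟩ := ihy
      refine ⟨l1 ++ l2, by simp [hl1], fun τ hτ => ?_⟩
      rw [hτ.1 x (hJI x hx) y (hJI y hy), hΦappend]
      exact le_trans (norm_add_le _ _) (add_le_add (h1 τ hτ) (h2 τ hτ))
    | smul c x hx ih =>
      obtain ⟨l, hl, h1⟩ := ih
      refine ⟨stmt7Rep (⌈‖c‖⌉₊ + 1) l, stmt7Rep_ne_nil _ l hl, fun τ hτ => ?_⟩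
      rw [hτ.2.1 c x (hJI x hx), norm_mul, hΦrep]
      calc ‖c‖ * ‖τ x‖
          ≤ ‖c‖ * stmt7Phi e τ l :=
            mul_le_mul_of_nonneg_left (h1 τ hτ) (norm_nonneg _)
        _ ≤ ((⌈‖c‖⌉₊ + 1 : ℕ) : ℝ) * stmt7Phi e τ l := by
            refine mul_le_mul_of_nonneg_right ?_ (hΦnonneg τ hτ l)
            push_cast
            have := Nat.le_ceil ‖c‖
            linarith
  -- star closure
  have hJstar : ∀ x ∈ J, star x ∈ J := by
    intro x hx
    induction hx using Submodule.span_induction with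
    | mem s hs =>
      rw [(IsSelfAdjoint.of_nonneg hs.2.1).star_eq]
      exact Submodule.subset_span hs
    | zero => simpa using zero_mem J
    | add x y hx hy ihx ihy =>
      rw [star_add]; exact add_mem ihx ihy
    | smul c x hx ih =>
      rw [star_smul]; exact Submodule.smul_mem J _ ih
  -- hereditary
  have hJher : ∀ a' b : A, 0 ≤ a' → a' ≤ b → b ∈ J → a' ∈ J := by
    intro a' b ha0 hab hb
    obtain ⟨l, hl, hbound⟩ := hKEY b hb
    have hbI := hJI b hb
    have ha'I : a' ∈ I := hIher a' b ha0 hab hbI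
    refine Submodule.subset_span ⟨ha'I, ha0, l, hl, fun τ hτ => ?_⟩
    exact le_trans (hτmono τ hτ a' ha'I b hbI hab)
      (le_trans (Complex.re_le_norm _) (hbound τ hτ))
  -- symmetric
  have hJsym : ∀ x : A, star x * x ∈ J → x * star x ∈ J := by
    intro x hx
    obtain ⟨l, hl, hbound⟩ := hKEY _ hx
    have hIx : star x * x ∈ I := hJI _ hx
    refine Submodule.subset_span ⟨hIsym x hIx, mul_star_self_nonneg x, l, hl, fun τ hτ => ?_⟩
    rw [← hτ.2.2.2 x hIx]
    exact le_trans (Complex.re_le_norm _) (hbound τ hτ)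
  -- invariance
  have hJinv : ∀ (t : G), ∀ x ∈ J, t • x ∈ J := by
    intro t x hx
    induction hx using Submodule.span_induction with
    | mem s hs =>
      obtain ⟨hsI, hs0, l, hl, hbound⟩ := hs
      refine Submodule.subset_span ⟨hIinv t s hsI, stmt7_smul_nonneg hactmul hactstar t hs0,
        l.map (fun t' => t * t'), by simpa using hl, fun τ hτ => ?_⟩
      have hτ' : stmt7Tr I (fun x => τ (t • x)) := by
        refine ⟨?_, ?_, ?_, ?_⟩
        · intro x hxI y hyI
          simp only [smul_add]
          exact hτ.1 _ (hIinv t x hxI) _ (hIinv t y hyI)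
        · intro c x hxI
          simp only [hactsmul]
          exact hτ.2.1 c _ (hIinv t x hxI)
        · intro x hxI h0
          exact hτ.2.2.1 _ (hIinv t x hxI) (stmt7_smul_nonneg hactmul hactstar t h0)
        · intro x hxI
          have h1 : t • (star x * x) = star (t • x) * (t • x) := by
            rw [hactmul, hactstar]
          have h2 : t • (x * star x) = (t • x) * star (t • x) := by
            rw [hactmul, hactstar]
          simp only [h1, h2]
          exact hτ.2.2.2 (t • x) (h1 ▸ hIinv t _ hxI)
      calc (τ (t • s)).re ≤ stmt7Phi e (fun x => τ (t • x)) l := hbound _ hτ'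
        _ = stmt7Phi e τ (l.map fun t' => t * t') := by
            simp [stmt7Phi, List.map_map, Function.comp_def, mul_smul]
    | zero => simpa using zero_mem J
    | add x y hx hy ihx ihy =>
      rw [smul_add]; exact add_mem ihx ihy
    | smul c x hx ih =>
      rw [hactsmul]; exact Submodule.smul_mem J c ih
  -- ideal property
  have hmulS : ∀ s ∈ S, ∀ y : A, y * s ∈ J := by
    intro s hs y
    obtain ⟨hsI, hs0, l, hl, hbound⟩ := hs
    set r : A := CFC.sqrt s with hrdef
    have hr0 : 0 ≤ r := CFC.sqrt_nonneg s
    have hrr : r * r = s := CFC.sqrt_mul_sqrt_self s hs0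
    have hrsa : star r = r := (IsSelfAdjoint.of_nonneg hr0).star_eq
    set u : A := r * star y with hudef
    -- each polarization piece is in S
    have hw : ∀ c : ℂ, star (r + c • u) * (r + c • u) ∈ S := by
      intro c
      set w : A := r + c • u with hwdef
      have hexp : star w * w = r * r + c • (r * (r * star y))
          + (starRingEnd ℂ c) • (y * (r * r))
          + ((starRingEnd ℂ c) * c) • (y * (r * (r * star y))) := by
        simp only [hwdef, hudef, star_add, star_smul, star_mul, star_star, hrsa,
          Complex.star_def, mul_add, add_mul, smul_mul_assoc, mul_smul_comm, smul_smul,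
          mul_assoc]
        module
      have hm0 : r * r ∈ I := by rw [hrr]; exact hsI
      have hm1 : r * (r * star y) ∈ I := by
        rw [← mul_assoc, hrr]; exact (hIideal s hsI (star y)).2
      have hm2 : y * (r * r) ∈ I := by rw [hrr]; exact (hIideal s hsI y).1
      have hm3 : y * (r * (r * star y)) ∈ I := by
        rw [← mul_assoc r r, hrr]
        exact (hIideal (s * star y) (hIideal s hsI (star y)).2 y).1
      have hwI : star w * w ∈ I := by
        rw [hexp]
        exact add_mem (add_mem (add_mem hm0 (I.smul_mem _ hm1)) (I.smul_mem _ hm2))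
          (I.smul_mem _ hm3)
      -- the norm bound via the unitization
      set z : Unitization ℂ A := 1 + c • ((star y : A) : Unitization ℂ A) with hzdef
      set K : ℝ := ‖z * star z‖ with hKdef
      have hK0 : 0 ≤ K := norm_nonneg _
      have hwz : (w : Unitization ℂ A) = (r : Unitization ℂ A) * z := by
        simp [hwdef, hudef, hzdef, Unitization.inr_add, Unitization.inr_smul,
          Unitization.inr_mul, mul_add, mul_smul_comm, mul_one]
      have hwwle : w * star w ≤ K • s := by
        have hzsa : IsSelfAdjoint (z * star z) := IsSelfAdjoint.mul_star_self z
        have h1 : ((w * star w : A) : Unitization ℂ A)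
            = star ((r : A) : Unitization ℂ A) * (z * star z) * ((r : A) : Unitization ℂ A) := by
          rw [Unitization.inr_mul, Unitization.inr_star, hwz, star_mul]
          rw [← Unitization.inr_star, hrsa]
          noncomm_ring
        have h2 := CStarAlgebra.star_left_conjugate_le_norm_smul
          (a := ((r : A) : Unitization ℂ A)) (b := z * star z) hzsa
        rw [← Unitization.inr_le_iff _ _ (IsSelfAdjoint.mul_star_self w)
          ((IsSelfAdjoint.all K).smul (IsSelfAdjoint.of_nonneg hs0))]
        rw [h1]
        refine le_trans h2 (le_of_eq ?_)
        rw [← Unitization.inr_star, hrsa, ← Unitization.inr_mul, hrr, ← Unitization.inr_smul]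
      -- conclude membership in S
      refine ⟨hwI, star_mul_self_nonneg w, stmt7Rep (⌈K⌉₊ + 1) l,
        stmt7Rep_ne_nil _ l hl, fun τ hτ => ?_⟩
      have hwwI : w * star w ∈ I := hIsym w hwI
      have hKs : (K : ℂ) • s = K • s := Complex.coe_smul K s
      have hKsI : K • s ∈ I := by rw [← hKs]; exact I.smul_mem _ hsI
      have e1 : (τ (star w * w)).re = (τ (w * star w)).re := by
        rw [hτ.2.2.2 w hwI]
      have e2 : (τ (w * star w)).re ≤ (τ (K • s)).re :=
        hτmono τ hτ _ hwwI _ hKsI hwwle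
      have e3 : (τ (K • s)).re = K * (τ s).re := by
        rw [← hKs, hτ.2.1 (K : ℂ) s hsI]
        simp [Complex.re_ofReal_mul]
      rw [e1, hΦrep]
      calc (τ (w * star w)).re ≤ K * (τ s).re := by rw [← e3]; exact e2
        _ ≤ K * stmt7Phi e τ l := mul_le_mul_of_nonneg_left (hbound τ hτ) hK0
        _ ≤ ((⌈K⌉₊ + 1 : ℕ) : ℝ) * stmt7Phi e τ l := by
            refine mul_le_mul_of_nonneg_right ?_ (hΦnonneg τ hτ l)
            push_cast
            have := Nat.le_ceil K
            linarith
    -- assemble via polarization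
    have h5 : star u * r = y * s := by
      rw [hudef, star_mul, star_star, hrsa, mul_assoc, hrr]
    have hpol := stmt7_polar u r
    rw [← h5, hpol]
    exact add_mem (add_mem (add_mem
      (Submodule.smul_mem J _ (Submodule.subset_span (hw 1)))
      (Submodule.smul_mem J _ (Submodule.subset_span (hw Complex.I))))
      (Submodule.smul_mem J _ (Submodule.subset_span (hw (-1)))))
      (Submodule.smul_mem J _ (Submodule.subset_span (hw (-Complex.I))))
  have hJideal : ∀ x ∈ J, ∀ y : A, y * x ∈ J ∧ x * y ∈ J := by
    have hleft : ∀ x ∈ J, ∀ y : A, y * x ∈ J := by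
      intro x hx
      induction hx using Submodule.span_induction with
      | mem s hs => exact fun y => hmulS s hs y
      | zero => intro y; simpa using zero_mem J
      | add x x' hx hx' ihx ihx' =>
        intro y; rw [mul_add]; exact add_mem (ihx y) (ihx' y)
      | smul c x hx ih =>
        intro y; rw [mul_smul_comm]; exact Submodule.smul_mem J c (ih y)
    intro x hx y
    refine ⟨hleft x hx y, ?_⟩
    have h1 : star y * star x ∈ J := hleft _ (hJstar x hx) (star y)
    have h2 := hJstar _ h1
    rwa [star_mul, star_star, star_star] at h2
  -- conclude
  have haJ : a ∈ J := hmin J hJideal hJstar hJher hJsym hJinv (Submodule.subset_span heS)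
  obtain ⟨l, hl, hbound⟩ := hKEY a haJ
  refine ⟨l.length, List.length_pos_iff.mpr hl, l.get, ?_⟩
  intro τ h1 h2 h3 h4
  have hτ : stmt7Tr I τ := ⟨h1, h2, h3, h4⟩
  have hmain := le_trans (Complex.re_le_norm _) (hbound τ hτ)
  refine le_trans hmain (le_of_eq ?_)
  calc stmt7Phi e τ l
      = (List.ofFn (fun j => (τ (l.get j • e)).re)).sum := by
        unfold stmt7Phi
        exact congrArg List.sum (List.ofFn_getElem_eq_map l (fun t => (τ (t • e)).re)).symm
    _ = ∑ j : Fin l.length, (τ (l.get j • e)).re := List.sum_ofFn
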